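/- Let k be a field and ψ: k[T_0,...,T_p] → k[X,Y] the k-algebra map sending T_i to X^(p-i)*Y^i. Then the kernel of ψ restricted to homogeneous polynomials of degree 2 in the T_i is a k-vector space of dimension p(p-1)/2. -/

import Mathlib

open MvPolynomial

section Aux

variable {k : Type*} [Field k]

/-- Monomial form of `X 0 ^ a * X 1 ^ b`. -/
lemma aux_mono (a b : ℕ) :
    (X 0 : MvPolynomial (Fin 2) k) ^ a * X 1 ^ b
      = monomial (Finsupp.single 0 a + Finsupp.single 1 b) 1 := by
  rw [X_pow_eq_monomial, X_pow_eq_monomial, monomial_mul, one_mul]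

lemma aux_psi_monomial (p : ℕ) (d : Fin (p + 1) →₀ ℕ) :
    aeval (R := k) (fun i : Fin (p + 1) =>
        (X 0 : MvPolynomial (Fin 2) k) ^ (p - (i : ℕ)) * (X 1) ^ (i : ℕ)) (monomial d 1)
      = X 0 ^ (∑ i ∈ d.support, (p - (i : ℕ)) * d i)
          * X 1 ^ (∑ i ∈ d.support, (i : ℕ) * d i) := by
  rw [aeval_monomial, map_one, one_mul, Finsupp.prod]
  simp_rw [mul_pow, ← pow_mul]
  rw [Finset.prod_mul_distrib, Finset.prod_pow_eq_pow_sum, Finset.prod_pow_eq_pow_sum]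

lemma aux_sum_le (p : ℕ) (d : Fin (p + 1) →₀ ℕ) (hd : Finsupp.degree d = 2) :
    (∑ i ∈ d.support, (i : ℕ) * d i) ≤ 2 * p := by
  calc (∑ i ∈ d.support, (i : ℕ) * d i) ≤ ∑ i ∈ d.support, p * d i :=
        Finset.sum_le_sum fun i _ =>
          Nat.mul_le_mul_right _ (Nat.lt_succ_iff.mp i.isLt)
    _ = p * ∑ i ∈ d.support, d i := by rw [Finset.mul_sum]
    _ = 2 * p := by rw [show (∑ i ∈ d.support, d i) = 2 from hd, Nat.mul_comm]

lemma aux_sum_eq (p : ℕ) (d : Fin (p + 1) →₀ ℕ) (hd : Finsupp.degree d = 2) :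
    (∑ i ∈ d.support, (p - (i : ℕ)) * d i)
      = 2 * p - (∑ i ∈ d.support, (i : ℕ) * d i) := by
  apply Nat.eq_sub_of_add_eq
  rw [← Finset.sum_add_distrib]
  have : ∀ i ∈ d.support, (p - (i : ℕ)) * d i + (i : ℕ) * d i = p * d i := by
    intro i _
    rw [← Nat.add_mul, Nat.sub_add_cancel (Nat.lt_succ_iff.mp i.isLt)]
  rw [Finset.sum_congr rfl this, ← Finset.mul_sum,
    show (∑ i ∈ d.support, d i) = 2 from hd]
  ring

end Aux

/-- For the `k`-algebra map `ψ : k[T_0,…,T_p] → k[X,Y]`,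
`T_i ↦ X^(p-i)*Y^i`, the kernel of `ψ` restricted to homogeneous polynomials of
degree 2 is a `k`-vector space of dimension `p(p-1)/2`. -/
theorem stmt_15 {k : Type*} [Field k] (p : ℕ)
    (ψ : MvPolynomial (Fin (p + 1)) k →ₐ[k] MvPolynomial (Fin 2) k)
    (hψ : ψ = aeval (fun i : Fin (p + 1) =>
      (X 0 : MvPolynomial (Fin 2) k) ^ (p - (i : ℕ)) * (X 1) ^ (i : ℕ))) :
    Module.finrank k
        ((homogeneousSubmodule (Fin (p + 1)) k 2) ⊓
          (LinearMap.ker ψ.toLinearMap) : Submodule k (MvPolynomial (Fin (p + 1)) k)) =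
      p * (p - 1) / 2 := by
  classical
  set W : Submodule k (MvPolynomial (Fin (p + 1)) k) :=
    homogeneousSubmodule (Fin (p + 1)) k 2 with hW
  set S : Set (Fin (p + 1) →₀ ℕ) := { d | Finsupp.degree d = 2 } with hS
  -- Fintype on S
  have hdegsum : ∀ d : Fin (p + 1) →₀ ℕ, Finsupp.degree d = d.sum fun _ => id := fun d => rfl
  let eSym : Sym (Fin (p + 1)) 2 ≃ S :=
    (Sym.equivNatSum (Fin (p + 1)) 2).trans
      (Equiv.subtypeEquivRight fun d => by simp [hS, hdegsum d])
  have : Fintype S := Fintype.ofEquiv _ eSym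
  have hcardS : Fintype.card S = (p + 2).choose 2 := by
    rw [← Fintype.card_congr eSym, Sym.card_sym_eq_multichoose, Nat.multichoose_eq,
      Fintype.card_fin]
    norm_num
  -- W is the span of monomials of degree 2, and linear equiv to (S →₀ k)
  have hWsupp : W = AddMonoidAlgebra.supported k k S :=
    homogeneousSubmodule_eq_finsupp_supported (Fin (p + 1)) k 2
  let eW : W ≃ₗ[k] (S → k) :=
    (LinearEquiv.ofEq _ _ hWsupp).trans
      ((AddMonoidAlgebra.supportedEquivFinsupp S).trans (Finsupp.linearEquivFunOnFinite k k S))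
  have hWfin : FiniteDimensional k W := Module.Finite.equiv eW.symm
  have hWrank : Module.finrank k W = (p + 2).choose 2 := by
    rw [eW.finrank_eq, Module.finrank_fintype_fun_eq_card, hcardS]
  -- the family spanning the image
  let e : Fin (2 * p + 1) → MvPolynomial (Fin 2) k := fun s =>
    monomial (Finsupp.single 0 (2 * p - (s : ℕ)) + Finsupp.single 1 (s : ℕ)) 1
  have einj : Function.Injective
      (fun s : Fin (2 * p + 1) =>
        Finsupp.single (0 : Fin 2) (2 * p - (s : ℕ)) + Finsupp.single 1 (s : ℕ)) := by
    intro s t hst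
    have := DFunLike.congr_fun hst 1
    simp at this
    exact Fin.ext this
  have eindep : LinearIndependent k e :=
    (basisMonomials (Fin 2) k).linearIndependent.comp _ einj
  -- the image of W under ψ
  have hmap : Submodule.map ψ.toLinearMap W = Submodule.span k (Set.range e) := by
    apply le_antisymm
    · rw [hWsupp, AddMonoidAlgebra.supported_eq_span_single, Submodule.map_span, ← Set.image_comp]
      apply Submodule.span_le.mpr
      rintro - ⟨d, hd, rfl⟩
      have hd2 : Finsupp.degree d = 2 := hd
      refine Submodule.subset_span
        ⟨⟨∑ i ∈ d.support, (i : ℕ) * d i, Nat.lt_succ_of_le (aux_sum_le p d hd2)⟩, ?_⟩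
      show monomial _ 1 = ψ (monomial d 1)
      rw [hψ]
      rw [aux_psi_monomial (k := k) p d, aux_sum_eq p d hd2, aux_mono]
    · rw [Submodule.span_le]
      rintro - ⟨s, rfl⟩
      have hs : (s : ℕ) ≤ 2 * p := Nat.lt_succ_iff.mp s.isLt
      set i : ℕ := min (s : ℕ) p with hi
      set j : ℕ := (s : ℕ) - i with hj
      have hip : i ≤ p := min_le_right _ _
      have hjp : j ≤ p := by omega
      have hij : i + j = (s : ℕ) := by omega
      refine ⟨X ⟨i, Nat.lt_succ_of_le hip⟩ * X ⟨j, Nat.lt_succ_of_le hjp⟩, ?_, ?_⟩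
      · exact (isHomogeneous_X k _).mul (isHomogeneous_X k _)
      · show ψ _ = e s
        rw [hψ]
        simp only [map_mul, aeval_X]
        have : ((X 0 : MvPolynomial (Fin 2) k) ^ (p - i) * X 1 ^ i)
            * (X 0 ^ (p - j) * X 1 ^ j)
            = X 0 ^ (2 * p - (s : ℕ)) * X 1 ^ (s : ℕ) := by
          rw [mul_mul_mul_comm, ← pow_add, ← pow_add,
            show p - i + (p - j) = 2 * p - (s : ℕ) by omega, hij]
        exact this.trans (aux_mono _ _)
  -- rank-nullity on the restriction of ψ to W
  let φ : W →ₗ[k] MvPolynomial (Fin 2) k := ψ.toLinearMap.domRestrict W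
  have hker : Module.finrank k (LinearMap.ker φ)
      = Module.finrank k (W ⊓ LinearMap.ker ψ.toLinearMap : Submodule k _) := by
    have h1 : LinearMap.ker φ
        = Submodule.comap W.subtype (W ⊓ LinearMap.ker ψ.toLinearMap) := by
      rw [LinearMap.ker_domRestrict]
      ext x
      simp [x.2]
    rw [h1]
    exact (Submodule.comapSubtypeEquivOfLe inf_le_left).finrank_eq
  have hrange : Module.finrank k (LinearMap.range φ) = 2 * p + 1 := by
    have : LinearMap.range φ = Submodule.span k (Set.range e) := by
      rw [LinearMap.range_domRestrict, hmap]
    rw [this, finrank_span_eq_card eindep, Fintype.card_fin]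
  have hrn := LinearMap.finrank_range_add_finrank_ker φ
  rw [hWrank, hrange, hker] at hrn
  -- arithmetic
  have hc : 2 * ((p + 2).choose 2) = (p + 2) * (p + 1) := by
    rw [Nat.choose_two_right]
    have h2 : 2 ∣ (p + 2) * (p + 2 - 1) := by
      simpa [Nat.mul_comm] using (Nat.even_mul_succ_self (p + 1)).two_dvd
    rw [Nat.mul_div_cancel' h2]
    congr 1
  have hg : 2 * (p * (p - 1) / 2) = p * (p - 1) := by
    have h2 : 2 ∣ p * (p - 1) := by
      rcases p with _ | q
      · simp
      · simpa [Nat.mul_comm, Nat.succ_sub_one] using (Nat.even_mul_succ_self q).two_dvd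
    rw [Nat.mul_div_cancel' h2]
  have hpoly : (p + 2) * (p + 1) = p * (p - 1) + 4 * p + 2 := by
    rcases p with _ | q
    · rfl
    · simp only [Nat.succ_sub_one]; ring
  omega
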